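/- Let G be a finite simple graph whose simplification G_s is defined, and suppose an edge {x,y} is inserted where x and y are singular vertices of degree 1 lying on distinct regular paths with singular endpoints z₁ ≠ y and z₂ ≠ x respectively. Then in the simplification of the new graph, the two topological edges {z₁,x} and {y,z₂} are replaced by a single topological edge {z₁,z₂} whose weight is λ_s({z₁,x}) + λ_s({y,z₂}) + λ({x,y}). -/
import Mathlib


/-- Merge case: inserting an edge {x,y} between two degree-1 singular vertices x, y
lying on distinct regular paths (from singular z₁ to x, and from y to singular z₂)
merges the two topological edges {z₁,x} and {y,z₂} into a single topological edge
{z₁,z₂} of weight λs({z₁,x}) + λs({y,z₂}) + λ({x,y}). -/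
theorem insert_edge_merge_case {V : Type*} [Fintype V] [DecidableEq V]
    (G G' : SimpleGraph V) [DecidableRel G.Adj] [DecidableRel G'.Adj]
    (w : Sym2 V → ℝ)
    (hnoreg : ¬ ∃ (v : V) (c : G.Walk v v), c.IsCycle ∧ ∀ u ∈ c.support, G.degree u = 2)
    (x y z₁ z₂ : V) (hxy : x ≠ y) (hnadj : ¬ G.Adj x y)
    (hdx : G.degree x = 1) (hdy : G.degree y = 1)
    (hG' : ∀ a b, G'.Adj a b ↔ G.Adj a b ∨ (a = x ∧ b = y) ∨ (a = y ∧ b = x))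
    (p : G.Walk z₁ x) (q : G.Walk y z₂) (hp : p.IsPath) (hq : q.IsPath)
    (hz₁ : G.degree z₁ ≠ 2) (hz₂ : G.degree z₂ ≠ 2)
    (hz₁x : z₁ ≠ x) (hz₂y : z₂ ≠ y) (hz₁y : z₁ ≠ y) (hz₂x : z₂ ≠ x)
    (hpreg : ∀ v ∈ p.support, v ≠ z₁ → v ≠ x → G.degree v = 2)
    (hqreg : ∀ v ∈ q.support, v ≠ y → v ≠ z₂ → G.degree v = 2)
    (hdisj : ∀ v ∈ p.support, v ∉ q.support) :
    ∃ r : G'.Walk z₁ z₂, r.IsPath ∧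
      G'.degree z₁ ≠ 2 ∧ G'.degree z₂ ≠ 2 ∧
      (∀ v ∈ r.support, v ≠ z₁ → v ≠ z₂ → G'.degree v = 2) ∧
      r.edges.Perm (p.edges ++ s(x, y) :: q.edges) ∧
      (r.edges.map w).sum = (p.edges.map w).sum + (q.edges.map w).sum + w s(x, y) := by
  classical
  -- degree facts
  have deg_eq : ∀ v : V, v ≠ x → v ≠ y → G'.degree v = G.degree v := by
    intro v hvx hvy
    have : G'.neighborFinset v = G.neighborFinset v := by
      ext u
      rw [SimpleGraph.mem_neighborFinset, hG', SimpleGraph.mem_neighborFinset]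
      constructor
      · rintro (h | ⟨rfl, rfl⟩ | ⟨rfl, rfl⟩)
        · exact h
        · exact absurd rfl hvx
        · exact absurd rfl hvy
      · exact fun h => Or.inl h
    simp only [SimpleGraph.degree, this]
  have deg_x : G'.degree x = 2 := by
    have : G'.neighborFinset x = insert y (G.neighborFinset x) := by
      ext u
      rw [SimpleGraph.mem_neighborFinset, hG', Finset.mem_insert,
        SimpleGraph.mem_neighborFinset]
      constructor
      · rintro (h | ⟨-, rfl⟩ | ⟨rfl, rfl⟩)
        · exact Or.inr h
        · exact Or.inl rfl
        · exact absurd rfl hxy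
      · rintro (rfl | h)
        · exact Or.inr (Or.inl ⟨rfl, rfl⟩)
        · exact Or.inl h
    have hyn : y ∉ G.neighborFinset x := by
      simp [SimpleGraph.mem_neighborFinset, hnadj]
    rw [SimpleGraph.degree, this, Finset.card_insert_of_notMem hyn,
      SimpleGraph.card_neighborFinset_eq_degree, hdx]
  have deg_y : G'.degree y = 2 := by
    have : G'.neighborFinset y = insert x (G.neighborFinset y) := by
      ext u
      rw [SimpleGraph.mem_neighborFinset, hG', Finset.mem_insert,
        SimpleGraph.mem_neighborFinset]
      constructor
      · rintro (h | ⟨rfl, rfl⟩ | ⟨-, rfl⟩)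
        · exact Or.inr h
        · exact absurd rfl hxy.symm
        · exact Or.inl rfl
      · rintro (rfl | h)
        · exact Or.inr (Or.inr ⟨rfl, rfl⟩)
        · exact Or.inl h
    have hxn : x ∉ G.neighborFinset y := by
      simp only [SimpleGraph.mem_neighborFinset]
      exact fun h => hnadj h.symm
    rw [SimpleGraph.degree, this, Finset.card_insert_of_notMem hxn,
      SimpleGraph.card_neighborFinset_eq_degree, hdy]
  -- lift the walks to G'
  have hsub : ∀ {a b : V}, G.Adj a b → G'.Adj a b := fun h => (hG' _ _).2 (Or.inl h)
  have hpe : ∀ e ∈ p.edges, e ∈ G'.edgeSet := by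
    intro e he
    have := p.edges_subset_edgeSet he
    revert this
    refine e.ind (fun a b h => ?_)
    exact hsub h
  have hqe : ∀ e ∈ q.edges, e ∈ G'.edgeSet := by
    intro e he
    have := q.edges_subset_edgeSet he
    revert this
    refine e.ind (fun a b h => ?_)
    exact hsub h
  have hxy' : G'.Adj x y := (hG' x y).2 (Or.inr (Or.inl ⟨rfl, rfl⟩))
  refine ⟨(p.transfer G' hpe).append (SimpleGraph.Walk.cons hxy' (q.transfer G' hqe)),
    ?_, ?_, ?_, ?_, ?_, ?_⟩
  · rw [SimpleGraph.Walk.isPath_def, SimpleGraph.Walk.support_append]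
    simp only [SimpleGraph.Walk.support_cons, SimpleGraph.Walk.support_transfer,
      List.tail_cons]
    exact List.Nodup.append hp.support_nodup hq.support_nodup
      (fun v hv hv' => hdisj v hv hv')
  · rw [deg_eq z₁ hz₁x hz₁y]; exact hz₁
  · rw [deg_eq z₂ hz₂x hz₂y]; exact hz₂
  · intro v hv hvz₁ hvz₂
    rw [SimpleGraph.Walk.support_append] at hv
    simp only [SimpleGraph.Walk.support_cons, SimpleGraph.Walk.support_transfer,
      List.tail_cons, List.mem_append] at hv
    by_cases hvx : v = x
    · subst hvx; exact deg_x
    by_cases hvy : v = y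
    · subst hvy; exact deg_y
    rw [deg_eq v hvx hvy]
    rcases hv with hv | hv
    · exact hpreg v hv hvz₁ hvx
    · exact hqreg v hv hvy hvz₂
  · rw [SimpleGraph.Walk.edges_append]
    simp only [SimpleGraph.Walk.edges_cons, SimpleGraph.Walk.edges_transfer]
    exact List.Perm.refl _
  · rw [SimpleGraph.Walk.edges_append]
    simp only [SimpleGraph.Walk.edges_cons, SimpleGraph.Walk.edges_transfer,
      List.map_append, List.sum_append, List.map_cons, List.sum_cons]
    ring
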